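/- Assume (T6). Then for all f, g ∈ F and γ ∈ Γ, the γ-term of the product satisfies (fg)γ = Σ (fα)(gβ), where the sum ranges over the finitely many pairs (α, β) ∈ sp(f) × sp(g) with α + β = γ. -/

import Mathlib

namespace Stmt19Aux

variable {F : Type*} [Field F] {Γ : Type*} [AddCommGroup Γ] [LinearOrder Γ] [IsOrderedAddMonoid Γ]

/-- The support/spectrum of `x`. -/
def SP (v : F → WithTop Γ) (tr : F → Γ → F) (x : F) : Set Γ :=
  {γ' : Γ | v (x - tr x γ') = (γ' : WithTop Γ)}

/-- Bundle of the valuation/truncation axioms we need. -/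
structure Ax (v : F → WithTop Γ) (tr : F → Γ → F) : Prop where
  hv0 : ∀ f : F, v f = ⊤ ↔ f = 0
  hvm : ∀ f g : F, v (f * g) = v f + v g
  hva : ∀ f g : F, min (v f) (v g) ≤ v (f + g)
  T1 : ∀ (f : F) (α : Γ), (α : WithTop Γ) ≤ v (f - tr f α)
  T2 : ∀ (f : F) (α : Γ), (α : WithTop Γ) ≤ v f → tr f α = 0
  T3 : ∀ (f : F) (α β : Γ), α < β → tr (tr f α) β = tr f α
  T4a : ∀ (f g : F) (α : Γ), tr (f + g) α = tr f α + tr g α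
  T5 : ∀ f : F, (SP v tr f).IsWF
  T6 : ∀ (f g : F) (γ : Γ),
      (∀ α ∈ SP v tr f, ∀ β ∈ SP v tr g, α + β < γ) →
      ∀ δ ∈ SP v tr (f * g), δ < γ

variable {v : F → WithTop Γ} {tr : F → Γ → F}

section Basic
variable (hx : Ax v tr)
include hx

theorem v_zero : v 0 = ⊤ := (hx.hv0 0).2 rfl

theorem v_neg (a : F) : v (-a) = v a := by
  have h1 : v 1 = 0 := by
    have h := hx.hvm 1 1
    rw [mul_one] at h
    have h1t : v 1 ≠ ⊤ := fun ht => one_ne_zero ((hx.hv0 1).1 ht)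
    lift (v 1) to Γ using h1t with x hxx
    have hx0 : x = x + x := by exact_mod_cast h
    have : x = 0 := by
      have h2 : x + x ≤ x + 0 := by rw [add_zero, ← hx0]
      have h3 : x + 0 ≤ x + x := by rw [add_zero, ← hx0]
      have := le_antisymm h2 h3
      exact (add_left_cancel this)
    rw [this]; rfl
  have hm : v (-1 : F) + v (-1 : F) = 0 := by
    rw [← hx.hvm, neg_one_mul, neg_neg, h1]
  have hmt : v (-1 : F) ≠ ⊤ := fun ht => by simp [ht] at hm
  lift (v (-1 : F)) to Γ using hmt with y hy
  have hyy : y + y = 0 := by exact_mod_cast hm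
  have hy0 : y = 0 := by
    rcases lt_trichotomy y 0 with h | h | h
    · have h2 := add_lt_add h h
      rw [hyy, add_zero] at h2
      exact absurd h2 (lt_irrefl 0)
    · exact h
    · have h2 := add_lt_add h h
      rw [hyy, add_zero] at h2
      exact absurd h2 (lt_irrefl 0)
  have : v (-a) = v (-1 * a) := by rw [neg_one_mul]
  rw [this, hx.hvm, ← hy, hy0]
  simp

theorem v_sub_min (a b : F) : min (v a) (v b) ≤ v (a - b) := by
  have := hx.hva a (-b)
  rwa [v_neg hx, ← sub_eq_add_neg] at this

/-- ultrametric: if `v a < v b` then `v (a - b) = v a`. -/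
theorem v_sub_eq_left {a b : F} (h : v a < v b) : v (a - b) = v a := by
  refine le_antisymm ?_ (le_trans (le_min le_rfl h.le) (v_sub_min hx a b))
  by_contra hc
  push_neg at hc
  have : v a < v ((a - b) + b) := lt_of_lt_of_le (lt_min hc h) (hx.hva _ _)
  simp at this

theorem tr_zero (δ : Γ) : tr 0 δ = 0 :=
  hx.T2 0 δ (by rw [v_zero hx]; exact le_top)

theorem tr_neg (a : F) (δ : Γ) : tr (-a) δ = - tr a δ := by
  have h := hx.T4a a (-a) δ
  rw [add_neg_cancel, tr_zero hx] at h
  linear_combination -h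

theorem tr_sub (a b : F) (δ : Γ) : tr (a - b) δ = tr a δ - tr b δ := by
  rw [sub_eq_add_neg, hx.T4a, tr_neg hx, sub_eq_add_neg]

theorem tr_sum {ι : Type*} (s : Finset ι) (G : ι → F) (δ : Γ) :
    tr (∑ i ∈ s, G i) δ = ∑ i ∈ s, tr (G i) δ := by
  induction s using Finset.cons_induction with
  | empty => simpa using tr_zero hx δ
  | cons a s' hni ih => rw [Finset.sum_cons, hx.T4a, ih, Finset.sum_cons]

theorem notMem_SP_iff {x : F} {δ : Γ} : δ ∉ SP v tr x ↔ (δ : WithTop Γ) < v (x - tr x δ) := by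
  constructor
  · intro h
    exact lt_of_le_of_ne (hx.T1 x δ) (fun he => h he.symm)
  · intro h he
    exact absurd (he ▸ h) (lt_irrefl _)

theorem notMem_SP_of_lt_v {x : F} {δ : Γ} (h : (δ : WithTop Γ) < v x) : δ ∉ SP v tr x := by
  rw [notMem_SP_iff hx]
  rwa [hx.T2 x δ h.le, sub_zero]

theorem exists_v_mem_SP {x : F} (h : x ≠ 0) : ∃ δ : Γ, v x = (δ : WithTop Γ) ∧ δ ∈ SP v tr x := by
  have ht : v x ≠ ⊤ := fun he => h ((hx.hv0 x).1 he)
  lift (v x) to Γ using ht with δ hδ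
  refine ⟨δ, rfl, ?_⟩
  show v (x - tr x δ) = _
  rw [hx.T2 x δ hδ.le, sub_zero, ← hδ]

theorem eq_zero_of_forall_notMem_SP {x : F} (h : ∀ δ : Γ, δ ∉ SP v tr x) : x = 0 := by
  by_contra hc
  obtain ⟨δ, _, hmem⟩ := exists_v_mem_SP hx hc
  exact h δ hmem

theorem lt_v_of_SP {x : F} {c : Γ} (h : ∀ δ ∈ SP v tr x, c < δ) : (c : WithTop Γ) < v x := by
  by_cases hz : x = 0
  · rw [hz, v_zero hx]; exact WithTop.coe_lt_top c
  · obtain ⟨δ, hδ, hmem⟩ := exists_v_mem_SP hx hz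
    rw [hδ]
    exact_mod_cast h δ hmem

theorem notMem_SP_add {x y : F} {δ : Γ} (hxm : δ ∉ SP v tr x) (hym : δ ∉ SP v tr y) :
    δ ∉ SP v tr (x + y) := by
  rw [notMem_SP_iff hx] at hxm hym ⊢
  have : (x + y) - tr (x + y) δ = (x - tr x δ) + (y - tr y δ) := by rw [hx.T4a]; ring
  rw [this]
  exact lt_of_lt_of_le (lt_min hxm hym) (hx.hva _ _)

theorem notMem_SP_sub {x y : F} {δ : Γ} (hxm : δ ∉ SP v tr x) (hym : δ ∉ SP v tr y) :
    δ ∉ SP v tr (x - y) := by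
  rw [notMem_SP_iff hx] at hxm hym ⊢
  have : (x - y) - tr (x - y) δ = (x - tr x δ) - (y - tr y δ) := by rw [tr_sub hx]; ring
  rw [this]
  exact lt_of_lt_of_le (lt_min hxm hym) (v_sub_min hx _ _)

theorem notMem_SP_sum {ι : Type*} {s : Finset ι} {G : ι → F} {δ : Γ}
    (h : ∀ i ∈ s, δ ∉ SP v tr (G i)) : δ ∉ SP v tr (∑ i ∈ s, G i) := by
  induction s using Finset.cons_induction with
  | empty =>
    simp only [Finset.sum_empty]
    exact notMem_SP_of_lt_v hx (by rw [v_zero hx]; exact WithTop.coe_lt_top δ)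
  | cons a s' hni ih =>
    rw [Finset.sum_cons]
    exact notMem_SP_add hx (h a (Finset.mem_cons_self _ _))
      (ih fun i hi => h i (Finset.mem_cons_of_mem hi))

end Basic


variable {F : Type*} [Field F] {Γ : Type*} [AddCommGroup Γ] [LinearOrder Γ] [IsOrderedAddMonoid Γ]
variable {v : F → WithTop Γ} {tr : F → Γ → F}

section Tr
variable (hx : Ax v tr)
include hx

theorem tr_idem (x : F) (δ : Γ) : tr (tr x δ) δ = tr x δ := by
  have h := hx.T4a (tr x δ) (x - tr x δ) δ
  rw [add_sub_cancel] at h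
  rw [hx.T2 (x - tr x δ) δ (hx.T1 x δ), add_zero] at h
  exact h.symm

theorem tr_tr_of_le {x : F} {δ β : Γ} (h : β ≤ δ) : tr (tr x δ) β = tr x β := by
  have h4 := hx.T4a (tr x δ) (x - tr x δ) β
  rw [add_sub_cancel] at h4
  rw [hx.T2 (x - tr x δ) β (le_trans (WithTop.coe_le_coe.2 h) (hx.T1 x δ)), add_zero] at h4
  exact h4.symm

theorem SP_tr_subset (x : F) (δ : Γ) : SP v tr (tr x δ) ⊆ SP v tr x ∩ Set.Iio δ := by
  intro β hβ
  rcases lt_trichotomy β δ with h | h | h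
  · refine ⟨?_, h⟩
    have he : tr (tr x δ) β = tr x β := tr_tr_of_le hx h.le
    have hv : v (tr x δ - tr x β) = (β : WithTop Γ) := by
      have h2 := hβ; simp only [SP, Set.mem_setOf_eq, he] at h2; exact h2
    show v (x - tr x β) = (β : WithTop Γ)
    have hrw : x - tr x β = (tr x δ - tr x β) + (x - tr x δ) := by ring
    rw [hrw]
    have hlt : v (tr x δ - tr x β) < v (x - tr x δ) :=
      lt_of_eq_of_lt hv (lt_of_lt_of_le (WithTop.coe_lt_coe.2 h) (hx.T1 x δ))
    calc v ((tr x δ - tr x β) + (x - tr x δ))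
        = v ((tr x δ - tr x β) - -(x - tr x δ)) := by ring_nf
      _ = v (tr x δ - tr x β) := by
          rw [v_sub_eq_left hx (by rwa [v_neg hx])]
      _ = (β : WithTop Γ) := hv
  · exfalso
    have heq : tr (tr x δ) β = tr x δ := by rw [h, tr_idem hx]
    simp only [SP, Set.mem_setOf_eq, heq, sub_self, v_zero hx] at hβ
    exact (WithTop.coe_ne_top (a := β)) hβ.symm
  · exfalso
    have heq : tr (tr x δ) β = tr x δ := hx.T3 x δ β h
    simp only [SP, Set.mem_setOf_eq, heq, sub_self, v_zero hx] at hβ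
    exact (WithTop.coe_ne_top (a := β)) hβ.symm

theorem SP_sub_tr (x : F) (δ : Γ) : SP v tr (x - tr x δ) ⊆ SP v tr x ∩ Set.Ici δ := by
  intro β hβ
  rcases lt_or_ge β δ with h | h
  · exfalso
    exact (notMem_SP_of_lt_v hx (lt_of_lt_of_le (WithTop.coe_lt_coe.2 h) (hx.T1 x δ))) hβ
  · refine ⟨?_, h⟩
    have he : tr (tr x δ) β = tr x δ := by
      rcases eq_or_lt_of_le h with h' | h'
      · rw [← h', tr_idem hx]
      · exact hx.T3 x δ β h'
    have hrw : (x - tr x δ) - tr (x - tr x δ) β = x - tr x β := by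
      rw [tr_sub hx, he]; ring
    simp only [SP, Set.mem_setOf_eq, hrw] at hβ
    exact hβ

end Tr

section Term
variable (hx : Ax v tr) {term : F → Γ → F}
variable (hterm1 : ∀ (f : F) (γ : Γ), γ ∈ SP v tr f →
      (∃ δ : Γ, SP v tr (term f γ) = {δ}) ∧
      (γ : WithTop Γ) < v (f - tr f γ - term f γ))
include hx hterm1

theorem v_term {x : F} {α : Γ} (h : α ∈ SP v tr x) : v (term x α) = (α : WithTop Γ) := by
  obtain ⟨_, hv2⟩ := hterm1 x α h
  have hrw : term x α = (x - tr x α) - (x - tr x α - term x α) := by ring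
  rw [hrw, v_sub_eq_left hx (by rw [h]; exact hv2)]
  exact h

theorem SP_term {x : F} {α : Γ} (h : α ∈ SP v tr x) : SP v tr (term x α) = {α} := by
  obtain ⟨⟨δ, hδ⟩, _⟩ := hterm1 x α h
  have hα : α ∈ SP v tr (term x α) := by
    show v (term x α - tr (term x α) α) = (α : WithTop Γ)
    rw [hx.T2 (term x α) α (v_term hx hterm1 h).ge, sub_zero]
    exact v_term hx hterm1 h
  rw [hδ] at hα ⊢
  rw [Set.mem_singleton_iff.1 hα]

theorem tr_term_of_lt {x : F} {α β : Γ} (h : α ∈ SP v tr x) (hβ : α < β) :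
    tr (term x α) β = term x α := by
  have hsub : SP v tr (term x α - tr (term x α) β) ⊆ {α} ∩ Set.Ici β := by
    rw [← SP_term hx hterm1 h]
    exact fun z hz => ⟨(SP_sub_tr hx _ _ hz).1, (SP_sub_tr hx _ _ hz).2⟩
  have : term x α - tr (term x α) β = 0 := by
    apply eq_zero_of_forall_notMem_SP hx
    intro z hz
    obtain ⟨hz1, hz2⟩ := hsub hz
    rw [Set.mem_singleton_iff.1 hz1] at hz2
    exact absurd hβ (not_lt_of_ge hz2)
  linear_combination -this

theorem tr_term_of_le (hterm0 : ∀ (f : F) (γ : Γ), γ ∉ SP v tr f → term f γ = 0)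
    {x : F} {α β : Γ} (hβ : β ≤ α) :
    tr (term x α) β = 0 := by
  by_cases h : α ∈ SP v tr x
  · exact hx.T2 _ β (by rw [v_term hx hterm1 h]; exact_mod_cast hβ)
  · rw [hterm0 x α h, tr_zero hx]

end Term



section Key
open Pointwise
variable {v : F → WithTop Γ} {tr : F → Γ → F}

def KM2 (v : F → WithTop Γ) (tr : F → Γ → F) (γ : Γ) (S T : Set Γ)
    (a b : WithTop Γ) : Prop :=
  ∀ u w : F, SP v tr u ⊆ S → SP v tr w ⊆ T →
    (∀ α ∈ SP v tr u, (α : WithTop Γ) < a) →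
    (∀ β ∈ SP v tr w, (β : WithTop Γ) < b) →
    (∀ α ∈ SP v tr u, ∀ β ∈ SP v tr w, α + β ≠ γ) →
    γ ∉ SP v tr (u * w)

def KM1 (v : F → WithTop Γ) (tr : F → Γ → F) (γ : Γ) (S T : Set Γ)
    (a : WithTop Γ) : Prop :=
  ∀ b ∈ insert (⊤ : WithTop Γ) ((fun x : Γ => (x : WithTop Γ)) '' T), KM2 v tr γ S T a b

theorem keyL (hx : Ax v tr) (γ : Γ) (S T : Set Γ) (hS : S.IsWF) (hT : T.IsWF) :
    ∀ a ∈ insert (⊤ : WithTop Γ) ((fun x : Γ => (x : WithTop Γ)) '' S),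
      KM1 v tr γ S T a := by
  have hS' : (insert (⊤ : WithTop Γ) ((fun x : Γ => (x : WithTop Γ)) '' S)).IsWF :=
    ((hS.isPWO.image_of_monotone (fun _ _ h => WithTop.coe_le_coe.2 h)).insert ⊤).isWF
  have hT' : (insert (⊤ : WithTop Γ) ((fun x : Γ => (x : WithTop Γ)) '' T)).IsWF :=
    ((hT.isPWO.image_of_monotone (fun _ _ h => WithTop.coe_le_coe.2 h)).insert ⊤).isWF
  intro a ha
  refine Set.WellFoundedOn.induction (P := KM1 v tr γ S T) hS' ha ?_
  clear ha a
  intro a ha IH1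
  intro b hb
  refine Set.WellFoundedOn.induction (P := KM2 v tr γ S T a) hT' hb ?_
  clear hb b
  intro b hb IH2
  intro u w hu hw hua hwb hne
  by_cases hcase : ∀ α ∈ SP v tr u, ∀ β ∈ SP v tr w, α + β < γ
  · intro hmem
    exact lt_irrefl γ (hx.T6 u w γ hcase γ hmem)
  push_neg at hcase
  obtain ⟨α₀, hα₀, β₀, hβ₀, hge⟩ := hcase
  have hDwf : ((SP v tr u + SP v tr w) ∩ Set.Ioi γ).IsWF :=
    ((hx.T5 u).add (hx.T5 w)).mono Set.inter_subset_left
  have hDne : ((SP v tr u + SP v tr w) ∩ Set.Ioi γ).Nonempty :=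
    ⟨α₀ + β₀, Set.mem_add.2 ⟨α₀, hα₀, β₀, hβ₀, rfl⟩,
      lt_of_le_of_ne hge (fun h => hne α₀ hα₀ β₀ hβ₀ h.symm)⟩
  set γ'' := hDwf.min hDne with hγ''def
  obtain ⟨hγ''add, hγ''gt⟩ := hDwf.min_mem hDne
  rw [← hγ''def] at hγ''add hγ''gt
  obtain ⟨α₁, hα₁, β₁, hβ₁, hsum1⟩ := Set.mem_add.1 hγ''add
  have hAwf : ({α ∈ SP v tr u | ∃ β ∈ SP v tr w, α + β = γ''}).IsWF :=
    (hx.T5 u).mono (Set.sep_subset _ _)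
  have hAne : ({α ∈ SP v tr u | ∃ β ∈ SP v tr w, α + β = γ''}).Nonempty :=
    ⟨α₁, hα₁, β₁, hβ₁, hsum1⟩
  set αs := hAwf.min hAne with hαsdef
  obtain ⟨hαsu, βt', hβt', hsumt⟩ := hAwf.min_mem hAne
  have hβteq : βt' = γ'' - αs := eq_sub_of_add_eq' hsumt
  have hβtw : (γ'' - αs) ∈ SP v tr w := hβteq ▸ hβt'
  have hsum'' : αs + (γ'' - αs) = γ'' := by abel
  have hprod : u * w = tr u αs * tr w (γ'' - αs) +
      (tr u αs * (w - tr w (γ'' - αs)) +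
        ((u - tr u αs) * tr w (γ'' - αs) + (u - tr u αs) * (w - tr w (γ'' - αs)))) := by
    ring
  rw [hprod]
  apply notMem_SP_add hx
  · -- low * low : T6 at γ
    intro hmem
    refine lt_irrefl γ (hx.T6 _ _ γ ?_ γ hmem)
    intro α hα β hβ
    obtain ⟨hαu, hαlt⟩ := SP_tr_subset hx u αs hα
    obtain ⟨hβw, hβlt⟩ := SP_tr_subset hx w (γ'' - αs) hβ
    have hlt'' : α + β < γ'' := by
      have h2 := add_lt_add hαlt hβlt
      rwa [hsum''] at h2
    rcases lt_or_ge (α + β) γ with h | h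
    · exact h
    exfalso
    have hmemD : (α + β) ∈ (SP v tr u + SP v tr w) ∩ Set.Ioi γ :=
      ⟨Set.mem_add.2 ⟨α, hαu, β, hβw, rfl⟩,
        lt_of_le_of_ne h (fun he => hne α hαu β hβw he.symm)⟩
    exact hDwf.not_lt_min hDne hmemD hlt''
  apply notMem_SP_add hx
  · -- low * high : outer IH at αs
    have haS : (↑αs : WithTop Γ) ∈ insert (⊤ : WithTop Γ) ((fun x : Γ => (x : WithTop Γ)) '' S) :=
      Set.mem_insert_iff.2 (Or.inr ⟨αs, hu hαsu, rfl⟩)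
    refine IH1 (↑αs) haS (hua αs hαsu) b hb _ _
      (fun z hz => hu (SP_tr_subset hx u αs hz).1)
      (fun z hz => hw (SP_sub_tr hx w (γ'' - αs) hz).1)
      (fun α hα => WithTop.coe_lt_coe.2 (SP_tr_subset hx u αs hα).2)
      (fun β hβ => hwb β (SP_sub_tr hx w (γ'' - αs) hβ).1)
      (fun α hα β hβ => hne α (SP_tr_subset hx u αs hα).1 β (SP_sub_tr hx w (γ'' - αs) hβ).1)
  apply notMem_SP_add hx
  · -- high * low : inner IH at γ'' - αs
    have hbT : (↑(γ'' - αs) : WithTop Γ) ∈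
        insert (⊤ : WithTop Γ) ((fun x : Γ => (x : WithTop Γ)) '' T) :=
      Set.mem_insert_iff.2 (Or.inr ⟨γ'' - αs, hw hβtw, rfl⟩)
    refine IH2 (↑(γ'' - αs)) hbT (hwb _ hβtw) _ _
      (fun z hz => hu (SP_sub_tr hx u αs hz).1)
      (fun z hz => hw (SP_tr_subset hx w (γ'' - αs) hz).1)
      (fun α hα => hua α (SP_sub_tr hx u αs hα).1)
      (fun β hβ => WithTop.coe_lt_coe.2 (SP_tr_subset hx w (γ'' - αs) hβ).2)
      (fun α hα β hβ => hne α (SP_sub_tr hx u αs hα).1 β (SP_tr_subset hx w (γ'' - αs) hβ).1)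
  · -- high * high : valuation bound
    apply notMem_SP_of_lt_v hx
    have h1 : (↑αs : WithTop Γ) ≤ v (u - tr u αs) := hx.T1 u αs
    have h2 : (↑(γ'' - αs) : WithTop Γ) ≤ v (w - tr w (γ'' - αs)) := hx.T1 w (γ'' - αs)
    have h3 : (↑γ'' : WithTop Γ) ≤ v ((u - tr u αs) * (w - tr w (γ'' - αs))) := by
      have hc : (↑γ'' : WithTop Γ) = ↑αs + ↑(γ'' - αs) := by
        rw [← WithTop.coe_add, hsum'']
      rw [hx.hvm, hc]
      exact add_le_add h1 h2
    exact lt_of_lt_of_le (WithTop.coe_lt_coe.2 hγ''gt) h3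


end Key

end Stmt19Aux

namespace Stmt19Aux

variable {F : Type*} [Field F] {Γ : Type*} [AddCommGroup Γ] [LinearOrder Γ] [IsOrderedAddMonoid Γ]
variable {v : F → WithTop Γ} {tr : F → Γ → F}

section More
variable (hx : Ax v tr)
include hx

theorem lt_v_sub {x y : F} {c : Γ} (h1 : (c : WithTop Γ) < v x) (h2 : (c : WithTop Γ) < v y) :
    (c : WithTop Γ) < v (x - y) :=
  lt_of_lt_of_le (lt_min h1 h2) (v_sub_min hx x y)

theorem lt_v_sum {ι : Type*} {s : Finset ι} {G : ι → F} {c : Γ}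
    (h : ∀ i ∈ s, (c : WithTop Γ) < v (G i)) : (c : WithTop Γ) < v (∑ i ∈ s, G i) := by
  induction s using Finset.cons_induction with
  | empty => simp only [Finset.sum_empty]; rw [v_zero hx]; exact WithTop.coe_lt_top c
  | cons a s' hni ih =>
    rw [Finset.sum_cons]
    exact lt_of_lt_of_le (lt_min (h a (Finset.mem_cons_self _ _))
      (ih fun i hi => h i (Finset.mem_cons_of_mem hi))) (hx.hva _ _)

theorem le_v_sum {ι : Type*} {s : Finset ι} {G : ι → F} {c : Γ}
    (h : ∀ i ∈ s, (c : WithTop Γ) ≤ v (G i)) : (c : WithTop Γ) ≤ v (∑ i ∈ s, G i) := by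
  induction s using Finset.cons_induction with
  | empty => simp only [Finset.sum_empty]; rw [v_zero hx]; exact le_top
  | cons a s' hni ih =>
    rw [Finset.sum_cons]
    exact le_trans (le_min (h a (Finset.mem_cons_self _ _))
      (ih fun i hi => h i (Finset.mem_cons_of_mem hi))) (hx.hva _ _)

/-- convenient corollary of `keyL`. -/
theorem keyL' (γ : Γ) (u w : F)
    (hne : ∀ α ∈ SP v tr u, ∀ β ∈ SP v tr w, α + β ≠ γ) : γ ∉ SP v tr (u * w) := by
  have h := keyL hx γ (SP v tr u) (SP v tr w) (hx.T5 u) (hx.T5 w) ⊤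
    (Set.mem_insert _ _) ⊤ (Set.mem_insert _ _) u w subset_rfl subset_rfl
    (fun α _ => WithTop.coe_lt_top α) (fun β _ => WithTop.coe_lt_top β) hne
  exact h

end More

end Stmt19Aux

open Stmt19Aux in
theorem stmt_19
    (F : Type*) [Field F] (Γ : Type*) [AddCommGroup Γ] [LinearOrder Γ] [IsOrderedAddMonoid Γ]
    (v : F → WithTop Γ)
    (hv0 : ∀ f : F, v f = ⊤ ↔ f = 0)
    (hvm : ∀ f g : F, v (f * g) = v f + v g)
    (hva : ∀ f g : F, min (v f) (v g) ≤ v (f + g))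
    (C : Subfield F)
    (hC1 : ∀ c ∈ C, c ≠ 0 → v c = 0)
    (hC2 : ∀ f : F, v f = 0 → ∃ c ∈ C, 0 < v (f - c))
    (tr : F → Γ → F)
    (T1 : ∀ (f : F) (α : Γ), (α : WithTop Γ) ≤ v (f - tr f α))
    (T2 : ∀ (f : F) (α : Γ), (α : WithTop Γ) ≤ v f → tr f α = 0)
    (T3 : ∀ (f : F) (α β : Γ), α < β → tr (tr f α) β = tr f α)
    (T4a : ∀ (f g : F) (α : Γ), tr (f + g) α = tr f α + tr g α)
    (T4s : ∀ c ∈ C, ∀ (f : F) (α : Γ), tr (c * f) α = c * tr f α)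
    (T5 : ∀ f : F, {γ : Γ | v (f - tr f γ) = (γ : WithTop Γ)}.IsWF)
    (T6 : ∀ (f g : F) (γ : Γ),
      (∀ α ∈ {γ' : Γ | v (f - tr f γ') = (γ' : WithTop Γ)},
        ∀ β ∈ {γ' : Γ | v (g - tr g γ') = (γ' : WithTop Γ)}, α + β < γ) →
      ∀ δ ∈ {γ' : Γ | v (f * g - tr (f * g) γ') = (γ' : WithTop Γ)}, δ < γ)
    (term : F → Γ → F)
    (hterm0 : ∀ (f : F) (γ : Γ), γ ∉ {γ' : Γ | v (f - tr f γ') = (γ' : WithTop Γ)} → term f γ = 0)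
    (hterm1 : ∀ (f : F) (γ : Γ), γ ∈ {γ' : Γ | v (f - tr f γ') = (γ' : WithTop Γ)} →
      (∃ δ : Γ, {γ' : Γ | v (term f γ - tr (term f γ) γ') = (γ' : WithTop Γ)} = {δ}) ∧
      (γ : WithTop Γ) < v (f - tr f γ - term f γ))
    (f g : F) (γ : Γ) :
    ∃ s : Finset (Γ × Γ),
      (∀ p : Γ × Γ, p ∈ s ↔
        p.1 ∈ {γ' : Γ | v (f - tr f γ') = (γ' : WithTop Γ)} ∧
        p.2 ∈ {γ' : Γ | v (g - tr g γ') = (γ' : WithTop Γ)} ∧ p.1 + p.2 = γ) ∧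
      term (f * g) γ = ∑ p ∈ s, term f p.1 * term g p.2 := by
  classical
  have hx : Ax v tr := ⟨hv0, hvm, hva, T1, T2, T3, T4a, T5, T6⟩
  have hterm1' : ∀ (x : F) (δ : Γ), δ ∈ SP v tr x →
      (∃ δ' : Γ, SP v tr (term x δ) = {δ'}) ∧
      (δ : WithTop Γ) < v (x - tr x δ - term x δ) := hterm1
  have hterm0' : ∀ (x : F) (δ : Γ), δ ∉ SP v tr x → term x δ = 0 := hterm0
  have hf : (SP v tr f).IsPWO := (hx.T5 f).isPWO
  have hg : (SP v tr g).IsPWO := (hx.T5 g).isPWO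
  refine ⟨Finset.addAntidiagonal hf hg γ, fun p => Finset.mem_addAntidiagonal, ?_⟩
  set s : Finset (Γ × Γ) := Finset.addAntidiagonal hf hg γ with hsdef
  have hmem : ∀ p : Γ × Γ, p ∈ s ↔ p.1 ∈ SP v tr f ∧ p.2 ∈ SP v tr g ∧ p.1 + p.2 = γ :=
    fun p => Finset.mem_addAntidiagonal
  have hp1 : ∀ p ∈ s, p.1 ∈ SP v tr f := fun p hp => ((hmem p).1 hp).1
  have hp2 : ∀ p ∈ s, p.2 ∈ SP v tr g := fun p hp => ((hmem p).1 hp).2.1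
  have hpsum : ∀ p ∈ s, p.1 + p.2 = γ := fun p hp => ((hmem p).1 hp).2.2
  have hinj1 : ∀ p ∈ s, ∀ q ∈ s, p.1 = q.1 → p = q := by
    intro p hp q hq he
    have h1 := hpsum p hp
    have h2 := hpsum q hq
    rw [← he] at h2
    exact Prod.ext he (add_left_cancel (h1.trans h2.symm))
  have hinj2 : ∀ p ∈ s, ∀ q ∈ s, p.2 = q.2 → p = q := by
    intro p hp q hq he
    have h1 := hpsum p hp
    have h2 := hpsum q hq
    rw [← he] at h2
    exact Prod.ext (add_right_cancel (h1.trans h2.symm)) he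
  set Tf : F := ∑ p ∈ s, term f p.1 with hTf
  set Tg : F := ∑ p ∈ s, term g p.2 with hTg
  set h : F := ∑ p ∈ s, term f p.1 * term g p.2 with hh
  -- the sum pieces are supported in SP f, SP g respectively
  have SPTf_not : ∀ δ : Γ, δ ∉ SP v tr f → δ ∉ SP v tr Tf := by
    intro δ hδ
    rw [hTf]
    apply notMem_SP_sum hx
    intro p hp
    rw [SP_term hx hterm1' (hp1 p hp)]
    exact fun hm => hδ (Set.mem_singleton_iff.1 hm ▸ hp1 p hp)
  have SPTg_not : ∀ δ : Γ, δ ∉ SP v tr g → δ ∉ SP v tr Tg := by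
    intro δ hδ
    rw [hTg]
    apply notMem_SP_sum hx
    intro p hp
    rw [SP_term hx hterm1' (hp2 p hp)]
    exact fun hm => hδ (Set.mem_singleton_iff.1 hm ▸ hp2 p hp)
  have SPf'sub : SP v tr (f - Tf) ⊆ SP v tr f := by
    intro δ hδ
    by_contra hc
    exact notMem_SP_sub hx hc (SPTf_not δ hc) hδ
  have SPg'sub : SP v tr (g - Tg) ⊆ SP v tr g := by
    intro δ hδ
    by_contra hc
    exact notMem_SP_sub hx hc (SPTg_not δ hc) hδ
  -- exclusion of the matched frequencies
  have hexcl1 : ∀ p ∈ s, p.1 ∉ SP v tr (f - Tf) := by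
    intro p hp
    have hb : p.1 ∈ SP v tr f := hp1 p hp
    have htr : tr (f - Tf) p.1 = tr f p.1 - ∑ q ∈ s, tr (term f q.1) p.1 := by
      rw [tr_sub hx, hTf, tr_sum hx]
    have h0 : tr (term f p.1) p.1 = 0 := tr_term_of_le hx hterm1' hterm0' le_rfl
    have hsplit : Tf - (∑ q ∈ s, tr (term f q.1) p.1)
        = term f p.1 + ∑ q ∈ s.erase p, (term f q.1 - tr (term f q.1) p.1) := by
      rw [hTf, ← Finset.sum_sub_distrib,
        ← Finset.add_sum_erase s (fun q => term f q.1 - tr (term f q.1) p.1) hp, h0, sub_zero]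
    have hiden : (f - Tf) - tr (f - Tf) p.1
        = (f - tr f p.1 - term f p.1) - ∑ q ∈ s.erase p, (term f q.1 - tr (term f q.1) p.1) := by
      rw [htr]
      linear_combination -hsplit
    rw [notMem_SP_iff hx, hiden]
    apply lt_v_sub hx
    · exact (hterm1' f p.1 hb).2
    · apply lt_v_sum hx
      intro q hq
      have hqs : q ∈ s := Finset.mem_of_mem_erase hq
      have hkq : q.1 ∈ SP v tr f := hp1 q hqs
      have hne' : q.1 ≠ p.1 := fun he => (Finset.ne_of_mem_erase hq) (hinj1 q hqs p hp he)
      rcases lt_or_gt_of_ne hne' with hlt | hgt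
      · rw [tr_term_of_lt hx hterm1' hkq hlt, sub_self, v_zero hx]
        exact WithTop.coe_lt_top _
      · rw [tr_term_of_le hx hterm1' hterm0' hgt.le, sub_zero, v_term hx hterm1' hkq]
        exact WithTop.coe_lt_coe.2 hgt
  have hexcl2 : ∀ p ∈ s, p.2 ∉ SP v tr (g - Tg) := by
    intro p hp
    have hb : p.2 ∈ SP v tr g := hp2 p hp
    have htr : tr (g - Tg) p.2 = tr g p.2 - ∑ q ∈ s, tr (term g q.2) p.2 := by
      rw [tr_sub hx, hTg, tr_sum hx]
    have h0 : tr (term g p.2) p.2 = 0 := tr_term_of_le hx hterm1' hterm0' le_rfl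
    have hsplit : Tg - (∑ q ∈ s, tr (term g q.2) p.2)
        = term g p.2 + ∑ q ∈ s.erase p, (term g q.2 - tr (term g q.2) p.2) := by
      rw [hTg, ← Finset.sum_sub_distrib,
        ← Finset.add_sum_erase s (fun q => term g q.2 - tr (term g q.2) p.2) hp, h0, sub_zero]
    have hiden : (g - Tg) - tr (g - Tg) p.2
        = (g - tr g p.2 - term g p.2) - ∑ q ∈ s.erase p, (term g q.2 - tr (term g q.2) p.2) := by
      rw [htr]
      linear_combination -hsplit
    rw [notMem_SP_iff hx, hiden]
    apply lt_v_sub hx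
    · exact (hterm1' g p.2 hb).2
    · apply lt_v_sum hx
      intro q hq
      have hqs : q ∈ s := Finset.mem_of_mem_erase hq
      have hkq : q.2 ∈ SP v tr g := hp2 q hqs
      have hne' : q.2 ≠ p.2 := fun he => (Finset.ne_of_mem_erase hq) (hinj2 q hqs p hp he)
      rcases lt_or_gt_of_ne hne' with hlt | hgt
      · rw [tr_term_of_lt hx hterm1' hkq hlt, sub_self, v_zero hx]
        exact WithTop.coe_lt_top _
      · rw [tr_term_of_le hx hterm1' hterm0' hgt.le, sub_zero, v_term hx hterm1' hkq]
        exact WithTop.coe_lt_coe.2 hgt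
  -- the four pieces
  have hA1 : γ ∉ SP v tr ((f - Tf) * (g - Tg)) := by
    apply keyL' hx γ
    intro α hα β hβ hsum
    have hpa : (α, β) ∈ s := (hmem (α, β)).2 ⟨SPf'sub hα, SPg'sub hβ, hsum⟩
    exact hexcl1 (α, β) hpa hα
  have hA2 : γ ∉ SP v tr ((f - Tf) * Tg) := by
    have hrw : (f - Tf) * Tg = ∑ p ∈ s, (f - Tf) * term g p.2 := by
      rw [hTg, Finset.mul_sum]
    rw [hrw]
    apply notMem_SP_sum hx
    intro p hp
    apply keyL' hx γ
    intro α hα β hβ hsum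
    rw [SP_term hx hterm1' (hp2 p hp)] at hβ
    rw [Set.mem_singleton_iff.1 hβ] at hsum
    have hα1 : α = p.1 := add_right_cancel (hsum.trans (hpsum p hp).symm)
    exact hexcl1 p hp (hα1 ▸ hα)
  have hA3 : γ ∉ SP v tr (Tf * (g - Tg)) := by
    have hrw : Tf * (g - Tg) = ∑ p ∈ s, term f p.1 * (g - Tg) := by
      rw [hTf, Finset.sum_mul]
    rw [hrw]
    apply notMem_SP_sum hx
    intro p hp
    apply keyL' hx γ
    intro α hα β hβ hsum
    rw [SP_term hx hterm1' (hp1 p hp)] at hα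
    rw [Set.mem_singleton_iff.1 hα] at hsum
    have hβ2 : β = p.2 := add_left_cancel (hsum.trans (hpsum p hp).symm)
    exact hexcl2 p hp (hβ2 ▸ hβ)
  have hA4 : γ ∉ SP v tr (Tf * Tg - h) := by
    have hdd : Tf * Tg - h = ∑ p ∈ s, ∑ q ∈ s.erase p, term f p.1 * term g q.2 := by
      rw [hTf, hTg, hh, Finset.sum_mul_sum, ← Finset.sum_sub_distrib]
      refine Finset.sum_congr rfl fun p hp => ?_
      rw [← Finset.add_sum_erase s (fun q => term f p.1 * term g q.2) hp]
      ring
    rw [hdd]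
    apply notMem_SP_sum hx
    intro p hp
    apply notMem_SP_sum hx
    intro q hq
    have hqs : q ∈ s := Finset.mem_of_mem_erase hq
    apply keyL' hx γ
    intro α hα β hβ hsum
    rw [SP_term hx hterm1' (hp1 p hp)] at hα
    rw [SP_term hx hterm1' (hp2 q hqs)] at hβ
    rw [Set.mem_singleton_iff.1 hα, Set.mem_singleton_iff.1 hβ] at hsum
    have h11 : p.1 = q.1 := add_right_cancel (hsum.trans (hpsum q hqs).symm)
    exact (Finset.ne_of_mem_erase hq) (hinj1 q hqs p hp h11.symm)
  have hA : γ ∉ SP v tr (f * g - h) := by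
    have hdecomp : f * g - h =
        (f - Tf) * (g - Tg) + ((f - Tf) * Tg + (Tf * (g - Tg) + (Tf * Tg - h))) := by ring
    rw [hdecomp]
    exact notMem_SP_add hx hA1 (notMem_SP_add hx hA2 (notMem_SP_add hx hA3 hA4))
  -- valuation of h
  have hvh : (γ : WithTop Γ) ≤ v h := by
    rw [hh]
    apply le_v_sum hx
    intro p hp
    rw [hx.hvm, v_term hx hterm1' (hp1 p hp), v_term hx hterm1' (hp2 p hp),
      ← WithTop.coe_add, hpsum p hp]
  have hSPh : ∀ δ ∈ SP v tr h, δ ≤ γ := by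
    intro δ hδ
    by_contra hc
    push_neg at hc
    rw [hh] at hδ
    refine notMem_SP_sum hx ?_ hδ
    intro p hp hm
    refine lt_irrefl δ (hx.T6 (term f p.1) (term g p.2) δ ?_ δ hm)
    intro α hα β hβ
    rw [SP_term hx hterm1' (hp1 p hp)] at hα
    rw [SP_term hx hterm1' (hp2 p hp)] at hβ
    rw [Set.mem_singleton_iff.1 hα, Set.mem_singleton_iff.1 hβ, hpsum p hp]
    exact hc
  -- two approximations of the γ-term of f*g
  have hD1 : (γ : WithTop Γ) < v (f * g - tr (f * g) γ - term (f * g) γ) := by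
    by_cases hγm : γ ∈ SP v tr (f * g)
    · exact (hterm1' (f * g) γ hγm).2
    · rw [hterm0' (f * g) γ hγm, sub_zero]
      exact (notMem_SP_iff hx).1 hγm
  have hD2 : (γ : WithTop Γ) < v (f * g - tr (f * g) γ - h) := by
    have htreq : tr (f * g - h) γ = tr (f * g) γ := by
      rw [tr_sub hx, hx.T2 h γ hvh, sub_zero]
    have h' := (notMem_SP_iff hx).1 hA
    rw [htreq] at h'
    have hrw : f * g - h - tr (f * g) γ = f * g - tr (f * g) γ - h := by ring
    rwa [hrw] at h'
  have hSPt : ∀ δ ∈ SP v tr (term (f * g) γ), δ ≤ γ := by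
    intro δ hδ
    by_cases hγm : γ ∈ SP v tr (f * g)
    · rw [SP_term hx hterm1' hγm] at hδ
      exact (Set.mem_singleton_iff.1 hδ).le
    · rw [hterm0' (f * g) γ hγm] at hδ
      exact absurd hδ (notMem_SP_of_lt_v hx (by rw [v_zero hx]; exact WithTop.coe_lt_top δ))
  -- conclusion
  by_contra hne
  obtain ⟨δ, hvδ, hδm⟩ := exists_v_mem_SP hx (sub_ne_zero_of_ne hne)
  have hδle : δ ≤ γ := by
    by_cases h1 : δ ∈ SP v tr (term (f * g) γ)
    · exact hSPt δ h1
    · by_cases h2 : δ ∈ SP v tr h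
      · exact hSPh δ h2
      · exact absurd hδm (notMem_SP_sub hx h1 h2)
  have hvgt : (γ : WithTop Γ) < v (term (f * g) γ - h) := by
    have hrw : term (f * g) γ - h =
        (f * g - tr (f * g) γ - h) - (f * g - tr (f * g) γ - term (f * g) γ) := by ring
    rw [hrw]
    exact lt_v_sub hx hD2 hD1
  rw [hvδ] at hvgt
  exact absurd (WithTop.coe_lt_coe.1 hvgt) (not_lt_of_ge hδle)
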